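/- Let Φ be a finite set of Laurent polynomial 'polar parts' in variables x₁,…,x_ℓ, each nonzero element φ of which is 'purely monomial', i.e. of the form u_φ·x₁^{-m₁}⋯x_ℓ^{-m_ℓ} with (m₁,…,m_ℓ) ∈ ℕ^ℓ \ {0} and u_φ a unit. If Φ is good (every difference of two distinct elements is purely monomial) and 0 ∈ Φ, then the set of exponent vectors {m_φ : φ ∈ Φ \ {0}} is totally ordered with respect to the componentwise partial order on ℕ^ℓ. -/

import Mathlib

/- STATEMENT 0: For a good finite set Φ of polar parts (elements of the fraction field of
ℂ[[x₁,…,x_ℓ]], each nonzero one purely monomial, i.e. of the form u·x^{-m} with m ∈ ℕ^ℓ \ {0}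
and u a unit of ℂ[[x]]) containing 0, the exponent vectors are totally ordered componentwise. -/

noncomputable section

abbrev PolarPS (ℓ : ℕ) := MvPowerSeries (Fin ℓ) ℂ

abbrev PolarK (ℓ : ℕ) := FractionRing (PolarPS ℓ)

/-- The monomial x^m in ℂ[[x₁,…,x_ℓ]]. -/
def Xmon {ℓ : ℕ} (m : Fin ℓ →₀ ℕ) : PolarPS ℓ := MvPowerSeries.monomial m (1 : ℂ)

/-- φ is purely monomial with exponent vector m : φ = u / x^m with m ≠ 0 and u a unit. -/
def IsPurelyMonomialWith {ℓ : ℕ} (φ : PolarK ℓ) (m : Fin ℓ →₀ ℕ) : Prop :=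
  m ≠ 0 ∧ ∃ u : PolarPS ℓ, IsUnit u ∧
    φ * algebraMap (PolarPS ℓ) (PolarK ℓ) (Xmon m) = algebraMap (PolarPS ℓ) (PolarK ℓ) u

def IsPurelyMonomial {ℓ : ℕ} (φ : PolarK ℓ) : Prop := ∃ m, IsPurelyMonomialWith φ m

instance polarPS_isDomain (ℓ : ℕ) : IsDomain (PolarPS ℓ) := NoZeroDivisors.to_isDomain _

lemma coeff_mul_Xmon {ℓ : ℕ} (p : PolarPS ℓ) (n k : Fin ℓ →₀ ℕ) :
    MvPowerSeries.coeff (R := ℂ) k (p * Xmon n) =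
      if n ≤ k then MvPowerSeries.coeff (R := ℂ) (k - n) p else 0 := by
  simp [Xmon, MvPowerSeries.coeff_mul_monomial]

lemma constCoeff_ne_zero {ℓ : ℕ} {u : PolarPS ℓ} (h : IsUnit u) :
    MvPowerSeries.coeff (R := ℂ) 0 u ≠ 0 := by
  rw [MvPowerSeries.isUnit_iff_constantCoeff] at h
  simpa [MvPowerSeries.coeff_zero_eq_constantCoeff] using h.ne_zero

theorem stmt0 {ℓ : ℕ} (Φ : Finset (PolarK ℓ)) (h0 : (0 : PolarK ℓ) ∈ Φ)
    (hgood : ∀ φ ∈ Φ, ∀ ψ ∈ Φ, φ ≠ ψ → IsPurelyMonomial (φ - ψ))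
    {φ ψ : PolarK ℓ} (hφ : φ ∈ Φ) (hψ : ψ ∈ Φ) (hφ0 : φ ≠ 0) (hψ0 : ψ ≠ 0)
    {mφ mψ : Fin ℓ →₀ ℕ}
    (hmφ : IsPurelyMonomialWith φ mφ) (hmψ : IsPurelyMonomialWith ψ mψ) :
    mφ ≤ mψ ∨ mψ ≤ mφ := by
  have inj : Function.Injective (algebraMap (PolarPS ℓ) (PolarK ℓ)) :=
    IsFractionRing.injective _ _
  obtain ⟨-, u, hu, hequ⟩ := hmφ
  obtain ⟨-, v, hv, heqv⟩ := hmψ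
  by_cases h : φ = ψ
  · subst h
    -- u * X^mψ = v * X^mφ
    have e : u * Xmon mψ = v * Xmon mφ := by
      apply inj
      simp only [map_mul]
      linear_combination (algebraMap (PolarPS ℓ) (PolarK ℓ) (Xmon mφ)) * heqv -
        (algebraMap (PolarPS ℓ) (PolarK ℓ) (Xmon mψ)) * hequ
    left
    by_contra hle
    have c := congrArg (MvPowerSeries.coeff (R := ℂ) mψ) e
    rw [coeff_mul_Xmon, coeff_mul_Xmon, if_pos le_rfl, if_neg hle, tsub_self] at c
    exact constCoeff_ne_zero hu c
  · obtain ⟨m, -, w, hw, heqw⟩ := hgood φ hφ ψ hψ h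
    by_cases hle : mφ ≤ mψ
    · exact Or.inl hle
    by_cases hle' : mψ ≤ mφ
    · exact Or.inr hle'
    exfalso
    have key : u * Xmon (mψ + m) = v * Xmon (mφ + m) + w * Xmon (mφ + mψ) := by
      apply inj
      have hX : ∀ a b : Fin ℓ →₀ ℕ, Xmon (a + b) = Xmon a * Xmon b := by
        intro a b
        simp [Xmon, MvPowerSeries.monomial_mul_monomial]
      simp only [map_mul, map_add, hX]
      linear_combination (-(algebraMap (PolarPS ℓ) (PolarK ℓ) (Xmon mψ) *
            algebraMap (PolarPS ℓ) (PolarK ℓ) (Xmon m))) * hequ +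
        (algebraMap (PolarPS ℓ) (PolarK ℓ) (Xmon mφ) *
            algebraMap (PolarPS ℓ) (PolarK ℓ) (Xmon m)) * heqv +
        (algebraMap (PolarPS ℓ) (PolarK ℓ) (Xmon mφ) *
            algebraMap (PolarPS ℓ) (PolarK ℓ) (Xmon mψ)) * heqw
    have h1 : mφ ≤ m := by
      by_contra hm
      have c := congrArg (MvPowerSeries.coeff (R := ℂ) (mψ + m)) key
      rw [coeff_mul_Xmon, map_add, coeff_mul_Xmon, coeff_mul_Xmon, if_pos le_rfl, tsub_self,
        if_neg (by rwa [add_le_add_iff_right]), if_neg (by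
          rw [add_comm mφ mψ, add_le_add_iff_left]; exact hm)] at c
      exact constCoeff_ne_zero hu (by simpa using c)
    have h2 : mψ ≤ m := by
      by_contra hm
      have c := congrArg (MvPowerSeries.coeff (R := ℂ) (mφ + m)) key
      rw [coeff_mul_Xmon, map_add, coeff_mul_Xmon, coeff_mul_Xmon,
        if_neg (by rwa [add_le_add_iff_right]), if_pos le_rfl, tsub_self,
        if_neg (by rw [add_le_add_iff_left]; exact hm)] at c
      exact constCoeff_ne_zero hv (by simpa using c.symm)
    have c := congrArg (MvPowerSeries.coeff (R := ℂ) (mφ + mψ)) key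
    rw [coeff_mul_Xmon, map_add, coeff_mul_Xmon, coeff_mul_Xmon,
      if_neg (fun hc => hle' (by
        have : m = mφ := le_antisymm (by rwa [add_comm mψ m, add_le_add_iff_right] at hc) h1
        rwa [this] at h2)),
      if_neg (fun hc => hle (by
        have : m = mψ := le_antisymm (by rwa [add_le_add_iff_left] at hc) h2
        rwa [this] at h1)),
      if_pos le_rfl, tsub_self] at c
    exact constCoeff_ne_zero hw (by simpa using c.symm)


end
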